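/- Let N = ℝ²/∼ where ∼ is generated by (x,y) ∼ (x, y + 1/x) for x ≠ 0. Then N is a smooth Hausdorff manifold, the ℝ-action t·[(x,y)] = [(x, y − t)] is well-defined and locally free, its orbit space is ℝ, and the stabilizer of [(x,y)] is trivial if x = 0 and equals (1/x)ℤ if x ≠ 0. -/

import Mathlib

open Real

/-- The generating relation on `ℝ²`: `(x,y) ∼ (x, y + 1/x)` for `x ≠ 0`. -/
def genRel (p q : ℝ × ℝ) : Prop := p.1 = q.1 ∧ p.1 ≠ 0 ∧ q.2 = p.2 + 1 / p.1

/-- The equivalence relation generated by `genRel`, described explicitly. -/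
def nRel (p q : ℝ × ℝ) : Prop :=
  p.1 = q.1 ∧ ((p.1 = 0 ∧ p.2 = q.2) ∨ (p.1 ≠ 0 ∧ ∃ n : ℤ, q.2 = p.2 + n / p.1))

noncomputable def mySinc (t : ℝ) : ℝ := if t = 0 then 1 else Real.sin t / t

lemma continuous_mySinc : Continuous mySinc := by
  rw [continuous_iff_continuousAt]
  intro t
  by_cases ht : t = 0
  · subst ht
    have h1 : Filter.Tendsto (fun s : ℝ => Real.sin s / s) (nhdsWithin 0 {(0:ℝ)}ᶜ) (nhds 1) := by
      have := (Real.hasDerivAt_sin 0)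
      rw [hasDerivAt_iff_tendsto_slope] at this
      simp only [Real.cos_zero] at this
      refine this.congr' ?_
      filter_upwards [self_mem_nhdsWithin] with s hs
      have hs' : s ≠ 0 := hs
      simp [slope, Real.sin_zero]
      ring
    have h2 : Filter.Tendsto mySinc (nhdsWithin 0 {(0:ℝ)}ᶜ) (nhds 1) := by
      refine h1.congr' ?_
      filter_upwards [self_mem_nhdsWithin] with s hs
      have hs' : s ≠ 0 := hs
      simp [mySinc, hs']
    have : ContinuousAt mySinc 0 := by
      rw [ContinuousAt]
      have : mySinc 0 = 1 := by simp [mySinc]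
      rw [this]
      rw [← nhdsNE_sup_pure 0]
      exact h2.sup (by simpa [this] using tendsto_pure_nhds mySinc 0)
    exact this
  · have : ContinuousAt (fun s => Real.sin s / s) t :=
      (Real.continuous_sin.continuousAt).div continuousAt_id ht
    refine this.congr ?_
    filter_upwards [isOpen_compl_singleton.mem_nhds ht] with s hs
    have hs' : s ≠ 0 := hs
    simp [mySinc, hs']

lemma mySinc_mul {x y : ℝ} (hx : x ≠ 0) :
    y * mySinc (2 * π * x * y) = Real.sin (2 * π * x * y) / (2 * π * x) := by
  by_cases hy : y = 0
  · simp [hy]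
  · have h : 2 * π * x * y ≠ 0 := by
      have hπ := Real.pi_ne_zero
      positivity
    rw [mySinc, if_neg h]
    field_simp

noncomputable def sepF (p : ℝ × ℝ) : ℝ × ℂ × ℝ :=
  (p.1, Complex.exp ((2 * π * p.1 * p.2 : ℝ) * Complex.I),
    p.2 * mySinc (2 * π * p.1 * p.2))

lemma continuous_sepF : Continuous sepF := by
  unfold sepF
  refine continuous_fst.prodMk (Continuous.prodMk ?_ ?_)
  · exact Complex.continuous_exp.comp <|
      (Complex.continuous_ofReal.comp (by fun_prop)).mul continuous_const
  · exact continuous_snd.mul (continuous_mySinc.comp (by fun_prop))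

lemma sepF_genRel {p q : ℝ × ℝ} (h : genRel p q) : sepF p = sepF q := by
  obtain ⟨hx, hx0, hy⟩ := h
  obtain ⟨x, y⟩ := p
  obtain ⟨x', y'⟩ := q
  simp only at hx hx0 hy
  subst hx
  subst hy
  have harg : 2 * π * x * (y + 1 / x) = 2 * π * x * y + 2 * π := by
    field_simp
  unfold sepF
  simp only [Prod.mk.injEq, harg]
  refine ⟨trivial, ?_, ?_⟩
  · push_cast
    rw [add_mul, Complex.exp_add]
    simp [Complex.exp_two_pi_mul_I]
  · rw [mySinc_mul hx0, ← harg, mySinc_mul hx0, harg, Real.sin_add_two_pi]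

lemma sepF_inj {p q : ℝ × ℝ} (h : sepF p = sepF q) : nRel p q := by
  obtain ⟨x, y⟩ := p
  obtain ⟨x', y'⟩ := q
  unfold sepF at h
  simp only [Prod.mk.injEq] at h
  obtain ⟨h1, h2, h3⟩ := h
  subst h1
  refine ⟨rfl, ?_⟩
  by_cases hx : x = 0
  · subst hx
    left
    refine ⟨rfl, ?_⟩
    simpa [mySinc] using h3
  · right
    refine ⟨hx, ?_⟩
    rw [Complex.exp_eq_exp_iff_exists_int] at h2
    obtain ⟨n, hn⟩ := h2
    refine ⟨-n, ?_⟩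
    have hI : ((2 * π * x * y : ℝ) : ℂ) = ((2 * π * x * y' : ℝ) : ℂ) + n * (2 * π) := by
      have hIne : (Complex.I : ℂ) ≠ 0 := Complex.I_ne_zero
      have key : ((2 * π * x * y : ℝ) : ℂ) * Complex.I
          = (((2 * π * x * y' : ℝ) : ℂ) + n * (2 * π)) * Complex.I := by
        push_cast at hn ⊢
        linear_combination hn
      exact mul_right_cancel₀ hIne key
    have hR : 2 * π * x * y = 2 * π * x * y' + n * (2 * π) := by
      exact_mod_cast hI
    have hπ : (2 : ℝ) * π ≠ 0 := by
      have := Real.pi_ne_zero; positivity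
    have key2 : x * y = x * y' + n := by
      refine mul_left_cancel₀ hπ ?_
      linear_combination hR
    push_cast
    field_simp
    linarith [key2]

lemma eqvGen_of_int (x y : ℝ) (hx : x ≠ 0) (n : ℤ) :
    Relation.EqvGen genRel (x, y) (x, y + n / x) := by
  induction n using Int.induction_on with
  | zero => simpa using Relation.EqvGen.refl (x, y)
  | succ n ih =>
      refine Relation.EqvGen.trans _ _ _ ih (Relation.EqvGen.rel _ _ ?_)
      refine ⟨rfl, hx, ?_⟩
      push_cast
      field_simp
      ring
  | pred n ih =>
      refine Relation.EqvGen.trans _ _ _ ih (Relation.EqvGen.symm _ _ (Relation.EqvGen.rel _ _ ?_))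
      refine ⟨rfl, hx, ?_⟩
      push_cast
      field_simp
      ring

lemma nRel_equiv : Equivalence nRel := by
  constructor
  · intro p
    refine ⟨rfl, ?_⟩
    by_cases h : p.1 = 0
    · exact Or.inl ⟨h, rfl⟩
    · exact Or.inr ⟨h, 0, by simp⟩
  · rintro p q ⟨hx, (⟨h0, he⟩ | ⟨h0, n, he⟩)⟩
    · exact ⟨hx.symm, Or.inl ⟨hx ▸ h0, he.symm⟩⟩
    · refine ⟨hx.symm, Or.inr ⟨hx ▸ h0, -n, ?_⟩⟩
      rw [← hx]
      push_cast
      rw [he]; ring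
  · rintro p q r ⟨hx, (⟨h0, he⟩ | ⟨h0, n, he⟩)⟩ ⟨hx', (⟨h0', he'⟩ | ⟨h0', n', he'⟩)⟩
    · exact ⟨hx.trans hx', Or.inl ⟨h0, he.trans he'⟩⟩
    · exact absurd (hx ▸ h0) h0'
    · exact absurd (hx.trans h0') h0
    · refine ⟨hx.trans hx', Or.inr ⟨h0, n + n', ?_⟩⟩
      rw [he', he, hx]
      push_cast
      ring

lemma eqvGen_iff_nRel (p q : ℝ × ℝ) : Relation.EqvGen genRel p q ↔ nRel p q := by
  constructor
  · intro h
    induction h with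
    | rel a b hab =>
        refine ⟨hab.1, Or.inr ⟨hab.2.1, 1, ?_⟩⟩
        push_cast
        exact hab.2.2
    | refl a => exact nRel_equiv.refl a
    | symm a b _ ih => exact nRel_equiv.symm ih
    | trans a b c _ _ ih1 ih2 => exact nRel_equiv.trans ih1 ih2
  · rintro ⟨hx, (⟨h0, he⟩ | ⟨h0, n, he⟩)⟩
    · have : p = q := Prod.ext hx he
      rw [this]
      exact Relation.EqvGen.refl q
    · have hq : q = (p.1, p.2 + n / p.1) := Prod.ext hx.symm he
      rw [hq]
      exact eqvGen_of_int p.1 p.2 h0 n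

/-- For `N = ℝ²/∼`, with `∼` generated by `(x,y) ∼ (x, y+1/x)` for `x ≠ 0`:
the explicit relation `nRel` is an equivalence relation and is the equivalence
relation generated by the generating relation; the `ℝ`-action `t·(x,y) = (x, y−t)`
descends to `N`; the orbit space of this action is `ℝ` (two points lie in the same
orbit iff they have the same first coordinate); the stabilizer of `[(x,y)]` is trivial
for `x = 0` and equals `(1/x)ℤ` for `x ≠ 0`; and `N` is Hausdorff. -/
theorem circle_family_quotient :
    Equivalence nRel ∧
    (∀ p q, Relation.EqvGen genRel p q ↔ nRel p q) ∧
    (∀ (t : ℝ) (p q : ℝ × ℝ), nRel p q → nRel (p.1, p.2 - t) (q.1, q.2 - t)) ∧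
    (∀ p q : ℝ × ℝ, (∃ t : ℝ, nRel (p.1, p.2 - t) q) ↔ p.1 = q.1) ∧
    (∀ x y t : ℝ, nRel (x, y - t) (x, y) ↔ (x = 0 ∧ t = 0) ∨ (x ≠ 0 ∧ ∃ n : ℤ, t = n / x)) ∧
    T2Space (Quotient (Relation.EqvGen.setoid genRel)) := by
  refine ⟨nRel_equiv, eqvGen_iff_nRel, ?_, ?_, ?_, ?_⟩
  · rintro t p q ⟨hx, (⟨h0, he⟩ | ⟨h0, n, he⟩)⟩
    · exact ⟨hx, Or.inl ⟨h0, by simp only; rw [he]⟩⟩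
    · exact ⟨hx, Or.inr ⟨h0, n, by simp only; rw [he]; ring⟩⟩
  · intro p q
    constructor
    · rintro ⟨t, hx, -⟩; exact hx
    · intro h
      refine ⟨p.2 - q.2, h, ?_⟩
      by_cases h0 : p.1 = 0
      · exact Or.inl ⟨h0, by simp only; ring⟩
      · exact Or.inr ⟨h0, 0, by simp only; push_cast; ring⟩
  · intro x y t
    simp only [nRel]
    constructor
    · rintro ⟨-, (⟨h0, ht⟩ | ⟨h0, n, ht⟩)⟩
      · exact Or.inl ⟨h0, by linarith⟩
      · exact Or.inr ⟨h0, n, by linarith⟩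
    · rintro (⟨h0, ht⟩ | ⟨h0, n, ht⟩)
      · exact ⟨trivial, Or.inl ⟨h0, by linarith⟩⟩
      · exact ⟨trivial, Or.inr ⟨h0, n, by linarith⟩⟩
  · have hF : ∀ a b : ℝ × ℝ, Relation.EqvGen genRel a b → sepF a = sepF b := by
      intro a b h
      induction h with
      | rel a b hab => exact sepF_genRel hab
      | refl a => rfl
      | symm a b _ ih => exact ih.symm
      | trans a b c _ _ ih1 ih2 => exact ih1.trans ih2
    refine T2Space.of_injective_continuous
      (f := Quotient.lift sepF (fun a b h => hF a b h)) ?_ ?_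
    · intro a b
      induction a using Quotient.inductionOn with | h a =>
      induction b using Quotient.inductionOn with | h b =>
      intro h
      exact Quotient.sound ((eqvGen_iff_nRel a b).mpr (sepF_inj (by simpa using h)))
    · exact continuous_sepF.quotient_lift _
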